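/- arXiv:2210.08752 — 2 statements merged into one kernel-verified Lean document; each statement's English description precedes it below -/
import Mathlib

section
/- Let X(r,s) = (ψ(r) + φ(s))/2 where ψ′(r) = (2rF′(r), F′(r)(1−r²), −F′(r)(1+r²)) and φ′(s) = (2sG′(s), G′(s)(1−s²), G′(s)(1+s²)) with F′(r) ≠ 0 and G′(s) ≠ 0. Then X_r and X_s are linearly independent whenever 1 + rs ≠ 0. -/
/-- With X_r = ψ′(r)/2 = (2rF′, F′(1−r²), −F′(1+r²))/2 and
X_s = φ′(s)/2 = (2sG′, G′(1−s²), G′(1+s²))/2, F′(r) ≠ 0, G′(s) ≠ 0,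
the vectors X_r, X_s are linearly independent whenever 1 + rs ≠ 0. -/
theorem stmt7 (F G : ℝ → ℝ) (hF : ContDiff ℝ 2 F) (hG : ContDiff ℝ 2 G)
    (r s : ℝ) (hF' : deriv F r ≠ 0) (hG' : deriv G s ≠ 0) (hrs : 1 + r * s ≠ 0) :
    LinearIndependent ℝ
      ![((2 : ℝ)⁻¹ • (2 * r * deriv F r, deriv F r * (1 - r ^ 2),
          -(deriv F r * (1 + r ^ 2))) : ℝ × ℝ × ℝ),
        ((2 : ℝ)⁻¹ • (2 * s * deriv G s, deriv G s * (1 - s ^ 2),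
          deriv G s * (1 + s ^ 2)) : ℝ × ℝ × ℝ)] := by
  rw [linearIndependent_fin2]
  constructor
  · simp only [Matrix.cons_val_one, Matrix.head_cons, Matrix.cons_val_zero, Prod.smul_mk, smul_eq_mul,
      Prod.mk_eq_zero, ne_eq, not_and]
    intro _ _ h
    have h1 : (1 : ℝ) + s ^ 2 > 0 := by positivity
    rcases mul_eq_zero.mp h with h | h
    · norm_num at h
    · exact hG' (by nlinarith [mul_eq_zero.mp h])
  · intro a h
    simp only [Matrix.cons_val_one, Matrix.head_cons, Matrix.cons_val_zero, Prod.smul_mk,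
      smul_eq_mul, Prod.mk.injEq] at h
    obtain ⟨h1, h2, h3⟩ := h
    set b := a * deriv G s with hb
    set c := deriv F r with hc
    have e1 : b * s = c * r := by linear_combination h1 + s * hb
    have e2 : b * (1 - s ^ 2) = c * (1 - r ^ 2) := by
      linear_combination 2 * h2 + (1 - s ^ 2) * hb
    have e3 : b * (1 + s ^ 2) = -(c * (1 + r ^ 2)) := by
      linear_combination 2 * h3 + (1 + s ^ 2) * hb
    have : c * (1 + r * s) = 0 := by linear_combination (e3 - e2) / 2 - s * e1
    exact hrs (by rcases mul_eq_zero.mp this with h | h; exact absurd h hF'; exact h)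
end

section
/- Let J: Ω → ℝ²ˣ² be continuous with J positive quasidefinite at every point (i.e. (J + Jᵀ)/2 positive definite) on a convex open Ω ⊆ ℝ². If f: Ω → ℝ² is differentiable with Df(x) = J(x) for all x, then f is injective. -/
/-- Gale–Nikaido: if f : Ω → ℝ² is differentiable on a convex open
Ω ⊆ ℝ² with continuous derivative J that is positive quasidefinite at every point
(i.e. ⟨J(x)v, v⟩ > 0 for all v ≠ 0), then f is injective on Ω. -/
theorem stmt11 (Ω : Set (ℝ × ℝ)) (hΩo : IsOpen Ω) (hΩc : Convex ℝ Ω)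
    (f : ℝ × ℝ → ℝ × ℝ) (J : ℝ × ℝ → (ℝ × ℝ) →L[ℝ] ℝ × ℝ)
    (hJcont : ContinuousOn J Ω)
    (hdf : ∀ x ∈ Ω, HasFDerivAt f (J x) x)
    (hpos : ∀ x ∈ Ω, ∀ v : ℝ × ℝ, v ≠ 0 →
      (J x v).1 * v.1 + (J x v).2 * v.2 > 0) :
    Set.InjOn f Ω := by
  intro a ha b hb hfab
  by_contra hab
  set v : ℝ × ℝ := b - a with hv
  have hvne : v ≠ 0 := sub_ne_zero.2 fun h => hab h.symm
  set γ : ℝ → ℝ × ℝ := fun t => a + t • v with hγ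
  have hγmem : ∀ t ∈ Set.Icc (0:ℝ) 1, γ t ∈ Ω := by
    intro t ht
    have := hΩc.add_smul_sub_mem ha hb ht
    simpa [hγ, hv] using this
  set φ : ℝ → ℝ := fun t => (f (γ t)).1 * v.1 + (f (γ t)).2 * v.2 with hφ
  have hφderiv : ∀ t ∈ Set.Icc (0:ℝ) 1,
      HasDerivAt φ ((J (γ t) v).1 * v.1 + (J (γ t) v).2 * v.2) t := by
    intro t ht
    have hγd : HasDerivAt γ v t := by
      have : HasDerivAt (fun t : ℝ => t • v) ((1:ℝ) • v) t :=
        (hasDerivAt_id t).smul_const v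
      simpa [hγ] using this.const_add a
    have hfd : HasDerivAt (fun t => f (γ t)) (J (γ t) v) t :=
      (hdf _ (hγmem t ht)).comp_hasDerivAt t hγd
    have h1d : HasDerivAt (fun t => (f (γ t)).1) (J (γ t) v).1 t := by
      simpa [Function.comp_def] using (ContinuousLinearMap.fst ℝ ℝ ℝ).hasFDerivAt.comp_hasDerivAt t hfd
    have h2d : HasDerivAt (fun t => (f (γ t)).2) (J (γ t) v).2 t := by
      simpa [Function.comp_def] using (ContinuousLinearMap.snd ℝ ℝ ℝ).hasFDerivAt.comp_hasDerivAt t hfd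
    exact (h1d.mul_const v.1).add (h2d.mul_const v.2)
  have hmono : StrictMonoOn φ (Set.Icc (0:ℝ) 1) := by
    apply strictMonoOn_of_deriv_pos (convex_Icc 0 1)
    · exact fun t ht => ((hφderiv t ht).continuousAt).continuousWithinAt
    · intro t ht
      rw [interior_Icc] at ht
      have ht' : t ∈ Set.Icc (0:ℝ) 1 := Set.mem_Icc_of_Ioo ht
      rw [(hφderiv t ht').deriv]
      exact hpos _ (hγmem t ht') v hvne
  have h01 : φ 0 < φ 1 := hmono (Set.left_mem_Icc.2 zero_le_one) (Set.right_mem_Icc.2 zero_le_one) zero_lt_one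
  have h0 : φ 0 = (f a).1 * v.1 + (f a).2 * v.2 := by simp [hφ, hγ]
  have h1 : φ 1 = (f b).1 * v.1 + (f b).2 * v.2 := by simp [hφ, hγ, hv]
  rw [h0, h1, hfab] at h01
  exact lt_irrefl _ h01
end
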